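/- arXiv:2308.03402 — 2 statements merged into one kernel-verified Lean document; each statement's English description precedes it below -/
import Mathlib

section
/- Let T be a rooted tree with each internal node having at least 2 children, and let R be a set of leaves. Define Safe(R) = { v : every leaf descendant of v lies in R } and define the minimal safe set M(R) = { v ∈ Safe(R) : the parent of v is not in Safe(R) (or v is the root) }. Then the leaf sets below distinct elements of M(R) are pairwise disjoint and their union equals R. -/
/-- Leaf descendants of `v`: leaves `ℓ` such that `v` is an ancestor of `ℓ`
(some iterate of the parent function maps `ℓ` to `v`). -/
def descLeaves {V : Type*} (L : Set V) (parent : V → V) (v : V) : Set V :=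
  {ℓ | ℓ ∈ L ∧ ∃ n : ℕ, parent^[n] ℓ = v}

/-- Safe nodes for a set `R` of revoked leaves: every leaf descendant lies in `R`. -/
def safeSet {V : Type*} (L : Set V) (parent : V → V) (R : Set V) : Set V :=
  {v | descLeaves L parent v ⊆ R}

/-- Minimal safe set: safe nodes whose parent is not safe (or which are the root). -/
def minSafeSet {V : Type*} (L : Set V) (parent : V → V) (root : V) (R : Set V) : Set V :=
  {v | v ∈ safeSet L parent R ∧ (v = root ∨ parent v ∉ safeSet L parent R)}

/-- Let `T` be a rooted tree (root fixed by `parent`, every node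
reaching the root by iterating `parent`, leaves having no children) in which
each internal node has at least 2 children, and let `R` be a set of leaves.
With `Safe(R)` the set of nodes all of whose leaf descendants lie in `R` and
`M(R)` the safe nodes whose parent is not safe (or which are the root), the
leaf sets below distinct elements of `M(R)` are pairwise disjoint and their
union equals `R`. -/
theorem minimal_safe_partitions_revoked {V : Type*} (L : Set V)
    (root : V) (parent : V → V)
    (hrootfix : parent root = root)
    (hreach : ∀ v : V, ∃ n : ℕ, parent^[n] v = root)
    (hleaf : ∀ ℓ ∈ L, ∀ v : V, parent v = ℓ → v = ℓ)
    (hbranch : ∀ v : V, (∃ u, u ≠ v ∧ parent u = v) →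
      ∃ u w, u ≠ w ∧ u ≠ v ∧ w ≠ v ∧ parent u = v ∧ parent w = v)
    (R : Set V) (hR : R ⊆ L) :
    (∀ u ∈ minSafeSet L parent root R, ∀ w ∈ minSafeSet L parent root R,
        u ≠ w → descLeaves L parent u ∩ descLeaves L parent w = ∅) ∧
    (⋃ v ∈ minSafeSet L parent root R, descLeaves L parent v) = R := by
  classical
  have mono : ∀ (x w : V) (j : ℕ), parent^[j] x = w →
      descLeaves L parent x ⊆ descLeaves L parent w := by
    rintro x w j hj ℓ ⟨hℓL, n, hn⟩
    exact ⟨hℓL, j + n, by rw [Function.iterate_add_apply, hn, hj]⟩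
  have leafdesc : ∀ (n : ℕ) (ℓ ℓ' : V), ℓ ∈ L → parent^[n] ℓ' = ℓ → ℓ' = ℓ := by
    intro n
    induction n with
    | zero => intro ℓ ℓ' _ h; simpa using h
    | succ n ih =>
      intro ℓ ℓ' hL h
      rw [Function.iterate_succ_apply'] at h
      exact ih ℓ ℓ' hL (hleaf ℓ hL _ h)
  have key : ∀ u ∈ minSafeSet L parent root R, ∀ w ∈ safeSet L parent R,
      ∀ k : ℕ, parent^[k+1] u = w → u = w := by
    rintro u ⟨husafe, hu⟩ w hw k hk
    rcases hu with hroot | hpns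
    · subst hroot
      rw [Function.iterate_fixed hrootfix] at hk
      exact hk
    · exfalso
      apply hpns
      intro ℓ hℓ
      exact hw (mono (parent u) w k (by rw [← Function.iterate_succ_apply, hk]) hℓ)
  constructor
  · intro u hu w hw hne
    rw [Set.eq_empty_iff_forall_notMem]
    rintro ℓ ⟨⟨hL, m, hm⟩, ⟨-, n, hn⟩⟩
    have step : ∀ (a b : V) (p q : ℕ), p < q → parent^[p] ℓ = a → parent^[q] ℓ = b →
        a ∈ minSafeSet L parent root R → b ∈ safeSet L parent R → a = b := by
      intro a b p q hpq hp hq ha hb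
      have h1 : parent^[q - p] a = b := by
        rw [← hp, ← Function.iterate_add_apply, Nat.sub_add_cancel hpq.le, hq]
      have h2 : q - p = (q - p - 1) + 1 := (Nat.succ_pred_eq_of_pos (by omega)).symm
      rw [h2] at h1
      exact key a ha b hb _ h1
    rcases lt_trichotomy m n with h | h | h
    · exact hne (step u w m n h hm hn hu hw.1)
    · exact hne (by rw [← hm, ← hn, h])
    · exact hne (step w u n m h hn hm hw hu.1).symm
  · ext ℓ
    simp only [Set.mem_iUnion, exists_prop]
    constructor
    · rintro ⟨v, hv, hℓ⟩
      exact hv.1 hℓ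
    · intro hℓR
      have hℓL : ℓ ∈ L := hR hℓR
      have hℓsafe : ℓ ∈ safeSet L parent R := by
        rintro ℓ' ⟨hL', n, hn⟩
        rw [leafdesc n ℓ ℓ' hℓL hn]
        exact hℓR
      by_cases hall : ∃ n : ℕ, parent^[n] ℓ ∉ safeSet L parent R
      · set n₀ := Nat.find hall with hn₀
        have hpos : 0 < n₀ := by
          rcases Nat.eq_zero_or_pos n₀ with h0 | h0
          · exfalso
            have := Nat.find_spec hall
            rw [← hn₀, h0] at this
            exact this (by simpa using hℓsafe)
          · exact h0
        refine ⟨parent^[n₀ - 1] ℓ, ⟨?_, Or.inr ?_⟩, hℓL, n₀ - 1, rfl⟩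
        · by_contra hns
          exact Nat.find_min hall (by omega) hns
        · obtain ⟨m, hm⟩ : ∃ m, n₀ = m + 1 := ⟨n₀ - 1, by omega⟩
          have h := Nat.find_spec hall
          rw [← hn₀, hm, Function.iterate_succ_apply'] at h
          have hm1 : n₀ - 1 = m := by omega
          rw [hm1]
          exact h
      · push_neg at hall
        obtain ⟨N, hN⟩ := hreach ℓ
        refine ⟨root, ⟨?_, Or.inl rfl⟩, hℓL, N, hN⟩
        rw [← hN]
        exact hall N
end

section
/- In a complete binary tree of height h with leaves 0, ..., 2^h − 1, for any set of revoked leaves forming an interval [a, b], the minimal safe set M (maximal fully-revoked subtree roots) has cardinality at most 2h. -/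
/-- Leaves covered by the subtree rooted at node `v = (t, i)` (height `t` above
the leaves, index `i`) of a complete `d`-ary tree. -/
def leafSet (d : ℕ) (v : ℕ × ℕ) : Finset ℕ :=
  Finset.Ico (v.2 * d ^ v.1) ((v.2 + 1) * d ^ v.1)

/-- All nodes of the complete `d`-ary tree of height `h`. -/
def treeNodes (d h : ℕ) : Finset (ℕ × ℕ) :=
  (Finset.range (h + 1)).biUnion fun t =>
    (Finset.range (d ^ (h - t))).image fun i => (t, i)

/-- Safe nodes for a set `R` of revoked leaves: all leaf descendants lie in `R`. -/
def safeNodes (d h : ℕ) (R : Finset ℕ) : Finset (ℕ × ℕ) :=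
  (treeNodes d h).filter fun v => leafSet d v ⊆ R

/-- Minimal safe set: safe nodes whose parent is not safe (the root `(h, 0)`
has no parent); these are the maximal fully-revoked subtree roots. -/
def minSafe (d h : ℕ) (R : Finset ℕ) : Finset (ℕ × ℕ) :=
  (safeNodes d h R).filter fun v => v.1 = h ∨ (v.1 + 1, v.2 / d) ∉ safeNodes d h R

lemma mem_safeNodes_iff (h a b t i : ℕ) :
    (t, i) ∈ safeNodes 2 h (Finset.Icc a b) ↔
      t ≤ h ∧ i < 2 ^ (h - t) ∧ a ≤ i * 2 ^ t ∧ (i + 1) * 2 ^ t ≤ b + 1 := by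
  have hpos : 0 < 2 ^ t := Nat.pow_pos (by norm_num)
  have hlt : i * 2 ^ t < (i + 1) * 2 ^ t := by
    exact (Nat.mul_lt_mul_right hpos).mpr (Nat.lt_succ_self i)
  unfold safeNodes treeNodes leafSet
  simp only [Finset.mem_filter, Finset.mem_biUnion, Finset.mem_range, Finset.mem_image]
  rw [← Finset.Ico_add_one_right_eq_Icc a b, Finset.Ico_subset_Ico_iff hlt]
  constructor
  · rintro ⟨⟨t', ht', i', hi', heq⟩, h1, h2⟩
    obtain ⟨rfl, rfl⟩ : t' = t ∧ i' = i := by simpa [Prod.ext_iff] using heq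
    exact ⟨by omega, hi', h1, h2⟩
  · rintro ⟨ht, hi, h1, h2⟩
    exact ⟨⟨t, by omega, i, hi, rfl⟩, h1, h2⟩

lemma mem_minSafe_iff (h a b t i : ℕ) :
    (t, i) ∈ minSafe 2 h (Finset.Icc a b) ↔
      (t, i) ∈ safeNodes 2 h (Finset.Icc a b) ∧
        (t = h ∨ (t + 1, i / 2) ∉ safeNodes 2 h (Finset.Icc a b)) := by
  simp [minSafe, Finset.mem_filter]

lemma pow_sub_split (h t : ℕ) (ht : t < h) : 2 ^ (h - t) = 2 ^ (h - (t + 1)) * 2 := by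
  have : h - t = (h - (t + 1)) + 1 := by omega
  rw [this, pow_succ]

/-- In a complete binary tree of height `h ≥ 1` with leaves
`0, ..., 2^h − 1`, for any set of revoked leaves forming an interval `[a, b]`,
the minimal safe set (maximal fully-revoked subtree roots) has cardinality at
most `2h`. -/
theorem interval_minSafe_card_le (h a b : ℕ) (hh : 1 ≤ h)
    (hab : a ≤ b) (hb : b < 2 ^ h) :
    (minSafe 2 h (Finset.Icc a b)).card ≤ 2 * h := by
  by_cases hroot : (h, 0) ∈ safeNodes 2 h (Finset.Icc a b)
  · -- root safe: minSafe ⊆ {(h,0)}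
    have hsub : minSafe 2 h (Finset.Icc a b) ⊆ {(h, 0)} := by
      rintro ⟨t, i⟩ hv
      rw [mem_minSafe_iff] at hv
      obtain ⟨hsafe, hpar⟩ := hv
      rw [mem_safeNodes_iff] at hsafe hroot
      by_cases ht : t = h
      · subst ht
        have : i = 0 := by
          have := hsafe.2.1
          simp at this
          omega
        simp [this]
      · exfalso
        have ht' : t < h := lt_of_le_of_ne hsafe.1 ht
        rcases hpar with h' | hpar
        · exact ht h'
        apply hpar
        rw [mem_safeNodes_iff]
        have hi2 : i / 2 < 2 ^ (h - (t + 1)) := by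
          have := hsafe.2.1
          rw [pow_sub_split h t ht'] at this
          omega
        refine ⟨by omega, hi2, ?_, ?_⟩
        · have : a = 0 := by
            have := hroot.2.2.1
            omega
          omega
        · have h1 : (i / 2 + 1) * 2 ^ (t + 1) ≤ 2 ^ (h - (t + 1)) * 2 ^ (t + 1) :=
            Nat.mul_le_mul_right _ (by omega)
          have h2 : 2 ^ (h - (t + 1)) * 2 ^ (t + 1) = 2 ^ h := by
            rw [← pow_add]; congr 1; omega
          have h3 : 2 ^ h ≤ b + 1 := by
            have := hroot.2.2.2
            simpa using this
          omega
    calc (minSafe 2 h (Finset.Icc a b)).card ≤ ({(h, 0)} : Finset (ℕ × ℕ)).card :=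
          Finset.card_le_card hsub
      _ ≤ 2 * h := by simp; omega
  · -- root not safe: inject into range h ×ˢ range 2
    have key : ∀ t i, (t, i) ∈ minSafe 2 h (Finset.Icc a b) → t < h := by
      intro t i hv
      rw [mem_minSafe_iff] at hv
      have hsafe := hv.1
      rw [mem_safeNodes_iff] at hsafe
      rcases lt_or_eq_of_le hsafe.1 with h' | rfl
      · exact h'
      · exfalso
        have : i = 0 := by
          have := hsafe.2.1; simp at this; omega
        subst this
        exact hroot hv.1
    have hinj : Set.InjOn (fun v : ℕ × ℕ => (v.1, v.2 % 2))
        (minSafe 2 h (Finset.Icc a b)) := by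
      rintro ⟨t, i⟩ hi' ⟨t', j⟩ hj' heq
      simp only [Prod.mk.injEq] at heq
      obtain ⟨rfl, hmod⟩ := heq
      simp only [Prod.mk.injEq, true_and]
      by_contra hne
      -- wlog i < j
      have main : ∀ i j : ℕ, i < j → i % 2 = j % 2 →
          (t, i) ∈ minSafe 2 h (Finset.Icc a b) →
          (t, j) ∈ minSafe 2 h (Finset.Icc a b) → False := by
        intro i j hij hm hvi hvj
        have htlt : t < h := key t i hvi
        rw [mem_minSafe_iff] at hvi hvj
        have hsi := hvi.1; have hsj := hvj.1
        rw [mem_safeNodes_iff] at hsi hsj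
        have hpos : (0:ℕ) < 2 ^ t := Nat.pow_pos (by norm_num)
        rcases Nat.even_or_odd i with he | ho
        · -- i even: parent of i is safe
          have hie : i % 2 = 0 := Nat.even_iff.mp he
          rcases hvi.2 with h' | hpar
          · omega
          apply hpar
          rw [mem_safeNodes_iff]
          have hdiv : i / 2 * 2 = i := by omega
          have hps : (2:ℕ) ^ (t + 1) = 2 ^ t * 2 := pow_succ 2 t
          refine ⟨by omega, ?_, ?_, ?_⟩
          · have := hsi.2.1
            rw [pow_sub_split h t htlt] at this
            omega
          · have : i / 2 * 2 ^ (t + 1) = i * 2 ^ t := by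
              rw [hps]
              calc i / 2 * (2 ^ t * 2) = i / 2 * 2 * 2 ^ t := by ring
                _ = i * 2 ^ t := by rw [hdiv]
            rw [this]; exact hsi.2.2.1
          · have heq2 : (i / 2 + 1) * 2 ^ (t + 1) = (i + 2) * 2 ^ t := by
              rw [hps]
              calc (i / 2 + 1) * (2 ^ t * 2) = (i / 2 * 2 + 2) * 2 ^ t := by ring
                _ = (i + 2) * 2 ^ t := by rw [hdiv]
            rw [heq2]
            have : (i + 2) * 2 ^ t ≤ (j + 1) * 2 ^ t :=
              Nat.mul_le_mul_right _ (by omega)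
            have := hsj.2.2.2
            omega
        · -- i odd, hence j odd: parent of j is safe
          have hio : i % 2 = 1 := Nat.odd_iff.mp ho
          have hjo : j % 2 = 1 := by omega
          rcases hvj.2 with h' | hpar
          · omega
          apply hpar
          rw [mem_safeNodes_iff]
          have hdiv : j / 2 * 2 = j - 1 := by omega
          have hps : (2:ℕ) ^ (t + 1) = 2 ^ t * 2 := pow_succ 2 t
          refine ⟨by omega, ?_, ?_, ?_⟩
          · have := hsj.2.1
            rw [pow_sub_split h t htlt] at this
            omega
          · have heq2 : j / 2 * 2 ^ (t + 1) = (j - 1) * 2 ^ t := by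
              rw [hps]
              calc j / 2 * (2 ^ t * 2) = j / 2 * 2 * 2 ^ t := by ring
                _ = (j - 1) * 2 ^ t := by rw [hdiv]
            rw [heq2]
            have : i * 2 ^ t ≤ (j - 1) * 2 ^ t :=
              Nat.mul_le_mul_right _ (by omega)
            have := hsi.2.2.1
            omega
          · have heq2 : (j / 2 + 1) * 2 ^ (t + 1) = (j + 1) * 2 ^ t := by
              rw [hps]
              calc (j / 2 + 1) * (2 ^ t * 2) = (j / 2 * 2 + 2) * 2 ^ t := by ring
                _ = (j + 1) * 2 ^ t := by rw [hdiv]; congr 1; omega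
            rw [heq2]
            exact hsj.2.2.2
      rcases Nat.lt_or_ge i j with hij | hij
      · exact main i j hij hmod hi' hj'
      · exact main j i (by omega) hmod.symm hj' hi'
    have hmaps : ∀ v ∈ minSafe 2 h (Finset.Icc a b),
        (fun v : ℕ × ℕ => (v.1, v.2 % 2)) v ∈ Finset.range h ×ˢ Finset.range 2 := by
      rintro ⟨t, i⟩ hv
      simp only [Finset.mem_product, Finset.mem_range]
      exact ⟨key t i hv, Nat.mod_lt i (by norm_num)⟩
    calc (minSafe 2 h (Finset.Icc a b)).card
        ≤ (Finset.range h ×ˢ Finset.range 2).card :=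
          Finset.card_le_card_of_injOn _ hmaps hinj
      _ = 2 * h := by simp [Finset.card_product]; ring
end
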